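/- Let ζ ∈ (0,1), k a large positive integer, and let ℱ be a family of affine subspaces of F_q^k, each of dimension at most d ≤ ζk/2, with |ℱ| ≤ q^{ck} for some constant c > 0. Let 𝒲 be a random subset of F_q^k obtained by including each x ∈ F_q^k independently with probability q^{−ζk}. Then with probability at least 1 − 2q^{−ck} (for k large enough), 𝒲 satisfies both: (i) |𝒲| ≥ q^{(1−2ζ)k}, and (ii) for every W ∈ ℱ, |𝒲 ∩ W| ≤ ⌈4c/ζ⌉. -/

import Mathlib

open scoped Classical


lemma aux_pow_sum {α : Type*} (u : Finset α) (a b : ℝ) :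
    ∑ t ∈ u.powerset, a ^ t.card * b ^ (u.card - t.card) = (a + b) ^ u.card := by
  rw [← Finset.prod_const, Finset.prod_add]
  refine Finset.sum_congr rfl fun t ht => ?_
  rw [Finset.prod_const, Finset.prod_const, Finset.card_sdiff_of_subset (Finset.mem_powerset.mp ht)]

lemma aux_sub_sum {α : Type*} [Fintype α] [DecidableEq α] (a b : ℝ) (T : Finset α) :
    ∑ S : Finset α, a ^ S.card * b ^ (Fintype.card α - S.card) * (if T ⊆ S then 1 else 0)
      = a ^ T.card * (a + b) ^ (Fintype.card α - T.card) := by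
  classical
  have h1 : ∀ S : Finset α, a ^ S.card * b ^ (Fintype.card α - S.card) * (if T ⊆ S then 1 else 0)
      = if T ⊆ S then a ^ S.card * b ^ (Fintype.card α - S.card) else 0 := by
    intro S; split <;> simp
  simp_rw [h1, ← Finset.sum_filter]
  have key : ∑ S ∈ Finset.univ.filter (fun S => T ⊆ S),
      a ^ S.card * b ^ (Fintype.card α - S.card)
      = ∑ U ∈ Tᶜ.powerset, a ^ T.card * (a ^ U.card * b ^ (Tᶜ.card - U.card)) := by
    refine Finset.sum_nbij' (fun S => S \ T) (fun U => U ∪ T) ?_ ?_ ?_ ?_ ?_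
    · intro S hS
      simp only [Finset.mem_filter] at hS
      simp only [Finset.mem_powerset]
      intro x hx
      simp only [Finset.mem_sdiff] at hx
      simp [Finset.mem_compl, hx.2]
    · intro U hU
      simp only [Finset.mem_powerset] at hU
      simp
    · intro S hS
      simp only [Finset.mem_filter] at hS
      exact Finset.sdiff_union_of_subset hS.2
    · intro U hU
      simp only [Finset.mem_powerset] at hU
      refine Finset.union_sdiff_cancel_right (Finset.disjoint_left.mpr ?_)
      intro x hxU hxT
      have := hU hxU
      simp only [Finset.mem_compl] at this
      exact this hxT
    · intro S hS
      simp only [Finset.mem_filter] at hS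
      have hc : (S \ T).card + T.card = S.card := Finset.card_sdiff_add_card_eq_card hS.2
      rw [← mul_assoc, ← pow_add]
      congr 1
      · congr 1; omega
      · congr 1
        have : Tᶜ.card = Fintype.card α - T.card := Finset.card_compl T
        have hS' : S.card ≤ Fintype.card α := Finset.card_le_card (Finset.subset_univ S) |>.trans_eq (Finset.card_univ)
        omega
  rw [key, ← Finset.mul_sum, aux_pow_sum, Finset.card_compl]


lemma aux_ncard_affine {F : Type*} [Field F] [Fintype F] {V : Type*} [AddCommGroup V]
    [Module F V] [Fintype V] (W : AffineSubspace F V) :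
    Set.ncard (W : Set V) ≤ Fintype.card F ^ Module.finrank F W.direction := by
  rcases Set.eq_empty_or_nonempty (W : Set V) with h | ⟨x, hx⟩
  · simp [h]
  · have e : W.direction ≃ (W : Set V) :=
      { toFun := fun v => ⟨v.1 +ᵥ x, AffineSubspace.vadd_mem_of_mem_direction v.2 hx⟩
        invFun := fun y => ⟨y.1 -ᵥ x, AffineSubspace.vsub_mem_direction y.2 hx⟩
        left_inv := fun v => by ext; simp
        right_inv := fun y => by ext; simp }
    have h1 : Set.ncard (W : Set V) = Nat.card (W : Set V) := (Nat.card_coe_set_eq _).symm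
    rw [h1, ← Nat.card_congr e, Nat.card_eq_fintype_card, Module.card_eq_pow_finrank (K := F)]

set_option maxHeartbeats 1000000 in
private lemma lemma_B {α : Type*} [Fintype α] [DecidableEq α] {q : ℕ} {ζ : ℝ} {kr : ℝ}
    (hq0 : (0:ℝ) < q)
    (p : ℝ) (hpdef : p = (q:ℝ) ^ (-(ζ * kr)))
    (hp0 : 0 < p) (h1p : (0:ℝ) ≤ 1 - p)
    (t : ℕ) (A : Finset α) (hA : (A.card : ℝ) ≤ (q:ℝ) ^ (ζ * kr / 2)) :
    ∑ S : Finset α,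
      p ^ S.card * (1 - p) ^ (Fintype.card α - S.card) * (if t ≤ (S ∩ A).card then (1:ℝ) else 0)
      ≤ (q:ℝ) ^ ((ζ * kr / 2 + -(ζ * kr)) * t) := by
  have hμ0 : ∀ S : Finset α, (0:ℝ) ≤ p ^ S.card * (1 - p) ^ (Fintype.card α - S.card) :=
    fun S => by positivity
  have hpt2 : ∀ S : Finset α, (if t ≤ (S ∩ A).card then (1:ℝ) else 0)
      ≤ ∑ T ∈ A.powersetCard t, (if T ⊆ S then (1:ℝ) else 0) := by
    intro S
    by_cases h : t ≤ (S ∩ A).card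
    · rw [if_pos h]
      obtain ⟨T, hTsub, hTcard⟩ := Finset.exists_subset_card_eq h
      have hTmem : T ∈ A.powersetCard t :=
        Finset.mem_powersetCard.mpr ⟨hTsub.trans Finset.inter_subset_right, hTcard⟩
      have hs := Finset.single_le_sum (f := fun T => (if T ⊆ S then (1:ℝ) else 0))
        (fun T _ => by positivity) hTmem
      simpa only [hTsub.trans Finset.inter_subset_left, if_true] using hs
    · rw [if_neg h]
      exact Finset.sum_nonneg fun T _ => by positivity
  have hpt3 : (0:ℝ) ≤ p ^ t := by positivity
  calc ∑ S : Finset α,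
      p ^ S.card * (1 - p) ^ (Fintype.card α - S.card) * (if t ≤ (S ∩ A).card then (1:ℝ) else 0)
      ≤ ∑ S : Finset α, p ^ S.card * (1 - p) ^ (Fintype.card α - S.card) *
          ∑ T ∈ A.powersetCard t, (if T ⊆ S then (1:ℝ) else 0) :=
        Finset.sum_le_sum fun S _ => mul_le_mul_of_nonneg_left (hpt2 S) (hμ0 S)
    _ = ∑ S : Finset α, ∑ T ∈ A.powersetCard t,
          p ^ S.card * (1 - p) ^ (Fintype.card α - S.card) * (if T ⊆ S then (1:ℝ) else 0) := by
        refine Finset.sum_congr rfl fun S _ => ?_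
        rw [Finset.mul_sum]
    _ = ∑ T ∈ A.powersetCard t, ∑ S : Finset α,
          p ^ S.card * (1 - p) ^ (Fintype.card α - S.card) * (if T ⊆ S then (1:ℝ) else 0) :=
        Finset.sum_comm
    _ = ∑ T ∈ A.powersetCard t, p ^ T.card * (p + (1 - p)) ^ (Fintype.card α - T.card) := by
        refine Finset.sum_congr rfl fun T _ => ?_
        exact aux_sub_sum p (1 - p) T
    _ = ∑ T ∈ A.powersetCard t, p ^ t := by
        refine Finset.sum_congr rfl fun T hT => ?_
        rw [(Finset.mem_powersetCard.mp hT).2, show p + (1 - p) = (1:ℝ) by ring,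
          one_pow, mul_one]
    _ = ((A.card.choose t : ℕ) : ℝ) * p ^ t := by
        rw [Finset.sum_const, nsmul_eq_mul, Finset.card_powersetCard]
    _ ≤ ((A.card : ℝ)) ^ t * p ^ t := by
        have hch : ((A.card.choose t : ℕ) : ℝ) ≤ (A.card : ℝ) ^ t := by
          exact_mod_cast Nat.choose_le_pow A.card t
        exact mul_le_mul_of_nonneg_right hch hpt3
    _ ≤ ((q:ℝ) ^ (ζ * kr / 2)) ^ t * p ^ t :=
        mul_le_mul_of_nonneg_right (pow_le_pow_left₀ (Nat.cast_nonneg _) hA t) hpt3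
    _ = ((q:ℝ) ^ (ζ * kr / 2) * p) ^ t := (mul_pow _ _ _).symm
    _ = ((q:ℝ) ^ (ζ * kr / 2 + -(ζ * kr))) ^ t := by
        rw [hpdef, ← Real.rpow_add hq0]
    _ = (q:ℝ) ^ ((ζ * kr / 2 + -(ζ * kr)) * t) := by
        rw [← Real.rpow_natCast ((q:ℝ) ^ (ζ * kr / 2 + -(ζ * kr))) t,
          ← Real.rpow_mul hq0.le]

set_option maxHeartbeats 1000000 in
private lemma lemma_A {α : Type*} [Fintype α] {q : ℕ} {ζ c L kr : ℝ}
    (hq0 : (0:ℝ) < q) (hL : 0 < L) (hLdef : L = Real.log q)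
    (h4 : (4:ℝ) ≤ (q:ℝ) ^ (ζ * kr)) (hE2 : 4 * (c * kr * L) ≤ (q:ℝ) ^ ((1 - ζ) * kr))
    (p : ℝ) (hpdef : p = (q:ℝ) ^ (-(ζ * kr)))
    (hp0 : 0 < p) (hp1 : p ≤ 1) (h1p : (0:ℝ) ≤ 1 - p)
    (hnq : ((Fintype.card α : ℕ) : ℝ) = (q:ℝ) ^ kr)
    (m : ℝ) (hmdef : m = (q:ℝ) ^ ((1 - 2 * ζ) * kr)) :
    ∑ S : Finset α, p ^ S.card * (1 - p) ^ (Fintype.card α - S.card) *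
        (if (S.card : ℝ) < m then (1:ℝ) else 0)
      ≤ (q:ℝ) ^ (-(c * kr)) := by
  have hμ0 : ∀ S : Finset α, (0:ℝ) ≤ p ^ S.card * (1 - p) ^ (Fintype.card α - S.card) :=
    fun S => by positivity
  set n : ℕ := Fintype.card α with hndef
  have hnp : (n:ℝ) * p = (q:ℝ) ^ ((1 - ζ) * kr) := by
    rw [hnq, hpdef, ← Real.rpow_add hq0]
    congr 1; ring
  have hstep : ∀ S : Finset α,
      p ^ S.card * (1 - p) ^ (n - S.card) * (if (S.card : ℝ) < m then (1:ℝ) else 0)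
      ≤ (2:ℝ) ^ m * ((p/2) ^ S.card * (1 - p) ^ (n - S.card)) := by
    intro S
    by_cases h : (S.card : ℝ) < m
    · rw [if_pos h, mul_one]
      have h2s : (2:ℝ) ^ (S.card : ℕ) ≤ (2:ℝ) ^ m := by
        rw [← Real.rpow_natCast 2 S.card]
        exact Real.rpow_le_rpow_of_exponent_le one_le_two h.le
      have hpos : (0:ℝ) < 2 ^ (S.card : ℕ) := by positivity
      have hre : (2:ℝ) ^ m * ((p/2) ^ S.card * (1 - p) ^ (n - S.card))
          = ((2:ℝ) ^ m / 2 ^ S.card) * (p ^ S.card * (1 - p) ^ (n - S.card)) := by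
        rw [div_pow]; ring
      rw [hre]
      have h1 : (1:ℝ) ≤ (2:ℝ) ^ m / 2 ^ S.card := (one_le_div hpos).mpr h2s
      exact le_mul_of_one_le_left (hμ0 S) h1
    · rw [if_neg h, mul_zero]; positivity
  have hsum2 : ∑ S : Finset α, (p/2) ^ S.card * (1 - p) ^ (n - S.card)
      = (1 - p/2) ^ n := by
    have h := aux_sub_sum (p/2) (1 - p) (∅ : Finset α)
    rw [show p/2 + (1 - p) = (1 - p/2 : ℝ) by ring] at h
    simpa only [Finset.card_empty, pow_zero, Nat.sub_zero, one_mul,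
      Finset.empty_subset, if_true, mul_one] using h
  calc ∑ S : Finset α,
      p ^ S.card * (1 - p) ^ (n - S.card) * (if (S.card : ℝ) < m then (1:ℝ) else 0)
      ≤ ∑ S : Finset α, (2:ℝ) ^ m * ((p/2) ^ S.card * (1 - p) ^ (n - S.card)) :=
        Finset.sum_le_sum fun S _ => hstep S
    _ = (2:ℝ) ^ m * ((1 - p/2) ^ n) := by rw [← Finset.mul_sum, hsum2]
    _ ≤ (q:ℝ) ^ (-(c * kr)) := by
        have h1 : (0:ℝ) ≤ 1 - p/2 := by linarith
        have h2 : (1 - p/2 : ℝ) ≤ Real.exp (-(p/2)) := by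
          have := Real.add_one_le_exp (-(p/2)); linarith
        have h3 : (1 - p/2 : ℝ) ^ n ≤ Real.exp (-(p/2)) ^ n := pow_le_pow_left₀ h1 h2 n
        have h4' : Real.exp (-(p/2)) ^ n = Real.exp ((n:ℝ) * (-(p/2))) :=
          (Real.exp_nat_mul _ n).symm
        have h5 : (2:ℝ) ^ m = Real.exp (Real.log 2 * m) :=
          Real.rpow_def_of_pos two_pos m
        have h6 : (q:ℝ) ^ (-(c * kr)) = Real.exp (L * (-(c * kr))) := by
          rw [hLdef]; exact Real.rpow_def_of_pos hq0 _
        have hmnp : m = (n:ℝ) * p * p := by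
          rw [hmdef, hnp, hpdef, ← Real.rpow_add hq0]
          congr 1; ring
        have hpq : p ≤ 1/4 := by
          rw [hpdef, Real.rpow_neg hq0.le]
          rw [show (1:ℝ)/4 = ((4:ℝ))⁻¹ by norm_num]
          exact inv_anti₀ (by norm_num) h4
        have hnp0 : (0:ℝ) ≤ (n:ℝ) * p := by positivity
        have hE2' : 4 * (c * kr * L) ≤ (n:ℝ) * p := by rw [hnp]; exact hE2
        have hlog2 : Real.log 2 ≤ 1 := by
          have := Real.log_le_sub_one_of_pos (by norm_num : (0:ℝ) < 2); linarith
        have hlog2' : (0:ℝ) ≤ Real.log 2 := Real.log_nonneg one_le_two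
        have hm0 : (0:ℝ) ≤ m := by
          rw [hmdef]; exact (Real.rpow_pos_of_pos hq0 _).le
        have t2 : m ≤ (n:ℝ) * p / 4 := by nlinarith
        have t1 : Real.log 2 * m ≤ m := by nlinarith
        have hexp : Real.log 2 * m + (n:ℝ) * (-(p/2)) ≤ L * (-(c * kr)) := by
          nlinarith
        calc (2:ℝ) ^ m * ((1 - p/2) ^ n)
            ≤ Real.exp (Real.log 2 * m) * Real.exp ((n:ℝ) * (-(p/2))) := by
              rw [h5]
              exact mul_le_mul_of_nonneg_left (h3.trans_eq h4') (Real.exp_pos _).le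
          _ = Real.exp (Real.log 2 * m + (n:ℝ) * (-(p/2))) := (Real.exp_add _ _).symm
          _ ≤ Real.exp (L * (-(c * kr))) := Real.exp_le_exp.mpr hexp
          _ = (q:ℝ) ^ (-(c * kr)) := h6.symm


set_option maxHeartbeats 1000000 in
private lemma main_estimate {F : Type*} [Field F] [Fintype F] {q : ℕ} {ζ c L : ℝ} {k : ℕ}
    (𝓕 : Finset (AffineSubspace F (Fin k → F)))
    (hq : Fintype.card F = q)
    (hdim : ∀ W ∈ 𝓕, (Module.finrank F W.direction : ℝ) ≤ ζ * k / 2)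
    (hcard : (𝓕.card : ℝ) ≤ (q : ℝ) ^ (c * k))
    (hζ0 : 0 < ζ) (hζ1 : ζ < 1) (hc : 0 < c)
    (hq1 : (1:ℝ) < q) (hq0 : (0:ℝ) < q) (hL : 0 < L) (hLdef : L = Real.log q)
    (h4 : (4:ℝ) ≤ (q:ℝ) ^ (ζ * k)) (hE2 : 4 * (c * k * L) ≤ (q:ℝ) ^ ((1 - ζ) * k))
    (p : ℝ) (hpdef : p = (q:ℝ) ^ (-(ζ * k)))
    (n : ℕ) (hndef : n = Fintype.card (Fin k → F))
    (hp0 : 0 < p) (hp1 : p ≤ 1) (h1p : (0:ℝ) ≤ 1 - p)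
    (hnq : (n:ℝ) = (q:ℝ) ^ (k:ℝ))
    (hnp : (n:ℝ) * p = (q:ℝ) ^ ((1 - ζ) * k))
    (hsum1 : ∑ S : Finset (Fin k → F), p ^ S.card * (1 - p) ^ (n - S.card) = 1)
    (ℓ : ℕ) (hℓdef : ℓ = ⌈4 * c / ζ⌉₊)
    (t : ℕ) (htdef : t = ℓ + 1)
    (m : ℝ) (hmdef : m = (q:ℝ) ^ ((1 - 2 * ζ) * k))
    (Wfin : AffineSubspace F (Fin k → F) → Finset (Fin k → F))
    (hWfindef : Wfin = fun W : AffineSubspace F (Fin k → F) =>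
      (Set.toFinite ((W : Set (Fin k → F)))).toFinset) :
    1 - 2 * (q : ℝ) ^ (-(c * k)) ≤
      ∑ S : Finset (Fin k → F),
        p ^ S.card * (1 - p) ^ (n - S.card) *
          (if (m ≤ (S.card : ℝ) ∧ ∀ W ∈ 𝓕,
              (((S : Set (Fin k → F)) ∩ (W : Set (Fin k → F))).ncard : ℝ) ≤ (ℓ : ℝ))
            then (1:ℝ) else 0) := by
  subst hndef
  have hμ0 : ∀ S : Finset (Fin k → F),
      (0:ℝ) ≤ p ^ S.card * (1 - p) ^ (Fintype.card (Fin k → F) - S.card) :=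
    fun S => by positivity
  set n : ℕ := Fintype.card (Fin k → F) with hndef
  -- pointwise domination
  have hpt : ∀ S : Finset (Fin k → F),
      p ^ S.card * (1 - p) ^ (n - S.card) *
        (if (m ≤ (S.card : ℝ) ∧ ∀ W ∈ 𝓕,
            (((S : Set (Fin k → F)) ∩ (W : Set (Fin k → F))).ncard : ℝ) ≤ (ℓ : ℝ))
          then (0:ℝ) else 1)
      ≤ p ^ S.card * (1 - p) ^ (n - S.card) * (if (S.card : ℝ) < m then (1:ℝ) else 0)
        + ∑ W ∈ 𝓕, p ^ S.card * (1 - p) ^ (n - S.card) *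
            (if t ≤ (S ∩ Wfin W).card then (1:ℝ) else 0) := by
    intro S
    have hf0 := hμ0 S
    have hsum0 : (0:ℝ) ≤ ∑ W ∈ 𝓕, p ^ S.card * (1 - p) ^ (n - S.card) *
        (if t ≤ (S ∩ Wfin W).card then (1:ℝ) else 0) :=
      Finset.sum_nonneg fun W _ => by positivity
    by_cases hC : (m ≤ (S.card : ℝ) ∧ ∀ W ∈ 𝓕,
        (((S : Set (Fin k → F)) ∩ (W : Set (Fin k → F))).ncard : ℝ) ≤ (ℓ : ℝ))
    · rw [if_pos hC, mul_zero]
      have : (0:ℝ) ≤ p ^ S.card * (1 - p) ^ (n - S.card) *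
          (if (S.card : ℝ) < m then (1:ℝ) else 0) := by positivity
      linarith
    · rw [if_neg hC, mul_one]
      rcases Classical.em (m ≤ (S.card : ℝ)) with hA | hA
      · have hBx : ¬ ∀ W ∈ 𝓕,
            (((S : Set (Fin k → F)) ∩ (W : Set (Fin k → F))).ncard : ℝ) ≤ (ℓ : ℝ) :=
          fun h => hC ⟨hA, h⟩
        push_neg at hBx
        obtain ⟨W, hW𝓕, hWgt⟩ := hBx
        have hset : ((S : Set (Fin k → F)) ∩ (W : Set (Fin k → F)))
            = ((S ∩ Wfin W : Finset (Fin k → F)) : Set (Fin k → F)) := by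
          rw [Finset.coe_inter, hWfindef]
          congr 1
          exact (Set.Finite.coe_toFinset _).symm
        rw [hset, Set.ncard_coe_finset] at hWgt
        have ht : t ≤ (S ∩ Wfin W).card := by
          have : (ℓ : ℕ) < (S ∩ Wfin W).card := by exact_mod_cast hWgt
          omega
        have hone : p ^ S.card * (1 - p) ^ (n - S.card)
            ≤ ∑ W ∈ 𝓕, p ^ S.card * (1 - p) ^ (n - S.card) *
                (if t ≤ (S ∩ Wfin W).card then (1:ℝ) else 0) := by
          have := Finset.single_le_sum
            (f := fun W => p ^ S.card * (1 - p) ^ (n - S.card) *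
              (if t ≤ (S ∩ Wfin W).card then (1:ℝ) else 0))
            (fun W _ => by positivity) hW𝓕
          simpa only [ht, if_true, mul_one] using this
        have : (0:ℝ) ≤ p ^ S.card * (1 - p) ^ (n - S.card) *
            (if (S.card : ℝ) < m then (1:ℝ) else 0) := by positivity
        linarith
      · rw [if_pos (lt_of_not_ge hA), mul_one]
        linarith
  -- size-event bound
  have hA : ∑ S : Finset (Fin k → F),
      p ^ S.card * (1 - p) ^ (n - S.card) * (if (S.card : ℝ) < m then (1:ℝ) else 0)
      ≤ (q:ℝ) ^ (-(c * k)) :=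
    lemma_A hq0 hL hLdef h4 hE2 p hpdef hp0 hp1 h1p hnq m hmdef
  -- subspace-event bounds
  have hWcard : ∀ W ∈ 𝓕, ((Wfin W).card : ℝ) ≤ (q:ℝ) ^ (ζ * k / 2) := by
    intro W hW
    have h1 : (Wfin W).card = ((W : Set (Fin k → F))).ncard := by
      rw [hWfindef]
      exact (Set.ncard_eq_toFinset_card _ _).symm
    have h2 := aux_ncard_affine W
    rw [hq] at h2
    have h3 : ((Wfin W).card : ℝ) ≤ ((q:ℝ)) ^ (Module.finrank F W.direction : ℕ) := by
      rw [h1]; exact_mod_cast h2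
    calc ((Wfin W).card : ℝ) ≤ (q:ℝ) ^ (Module.finrank F W.direction : ℕ) := h3
      _ = (q:ℝ) ^ ((Module.finrank F W.direction : ℕ) : ℝ) := (Real.rpow_natCast _ _).symm
      _ ≤ (q:ℝ) ^ (ζ * k / 2) := Real.rpow_le_rpow_of_exponent_le hq1.le (hdim W hW)
  have hB : ∀ W ∈ 𝓕, ∑ S : Finset (Fin k → F),
      p ^ S.card * (1 - p) ^ (n - S.card) * (if t ≤ (S ∩ Wfin W).card then (1:ℝ) else 0)
      ≤ (q:ℝ) ^ ((ζ * k / 2 + -(ζ * k)) * t) :=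
    fun W hW => lemma_B hq0 p hpdef hp0 h1p t (Wfin W) (hWcard W hW)
  -- exponent comparison for the union bound
  have hζℓ : 4 * c ≤ ζ * (ℓ : ℝ) := by
    have h1 : 4 * c / ζ ≤ (ℓ : ℝ) := by rw [hℓdef]; exact Nat.le_ceil _
    rw [div_le_iff₀ hζ0] at h1
    linarith [mul_comm ζ (ℓ:ℝ)]
  have hexpB : c * k + (ζ * k / 2 + -(ζ * k)) * (t:ℝ) ≤ -(c * k) := by
    have htℝ : (t:ℝ) = (ℓ:ℝ) + 1 := by rw [htdef]; push_cast; ring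
    rw [htℝ]
    have hk0 : (0:ℝ) ≤ (k:ℝ) := Nat.cast_nonneg k
    nlinarith [mul_nonneg hζ0.le hk0]
  -- bad-event bound
  have key : ∑ S : Finset (Fin k → F),
      p ^ S.card * (1 - p) ^ (n - S.card) *
        (if (m ≤ (S.card : ℝ) ∧ ∀ W ∈ 𝓕,
            (((S : Set (Fin k → F)) ∩ (W : Set (Fin k → F))).ncard : ℝ) ≤ (ℓ : ℝ))
          then (0:ℝ) else 1)
      ≤ 2 * (q:ℝ) ^ (-(c * k)) := by
    calc ∑ S : Finset (Fin k → F),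
        p ^ S.card * (1 - p) ^ (n - S.card) *
          (if (m ≤ (S.card : ℝ) ∧ ∀ W ∈ 𝓕,
              (((S : Set (Fin k → F)) ∩ (W : Set (Fin k → F))).ncard : ℝ) ≤ (ℓ : ℝ))
            then (0:ℝ) else 1)
        ≤ ∑ S : Finset (Fin k → F),
            (p ^ S.card * (1 - p) ^ (n - S.card) * (if (S.card : ℝ) < m then (1:ℝ) else 0)
              + ∑ W ∈ 𝓕, p ^ S.card * (1 - p) ^ (n - S.card) *
                  (if t ≤ (S ∩ Wfin W).card then (1:ℝ) else 0)) :=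
        Finset.sum_le_sum fun S _ => hpt S
      _ = (∑ S : Finset (Fin k → F),
            p ^ S.card * (1 - p) ^ (n - S.card) * (if (S.card : ℝ) < m then (1:ℝ) else 0))
          + ∑ S : Finset (Fin k → F), ∑ W ∈ 𝓕, p ^ S.card * (1 - p) ^ (n - S.card) *
              (if t ≤ (S ∩ Wfin W).card then (1:ℝ) else 0) := Finset.sum_add_distrib
      _ = (∑ S : Finset (Fin k → F),
            p ^ S.card * (1 - p) ^ (n - S.card) * (if (S.card : ℝ) < m then (1:ℝ) else 0))
          + ∑ W ∈ 𝓕, ∑ S : Finset (Fin k → F), p ^ S.card * (1 - p) ^ (n - S.card) *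
              (if t ≤ (S ∩ Wfin W).card then (1:ℝ) else 0) := by rw [Finset.sum_comm]
      _ ≤ (q:ℝ) ^ (-(c * k)) + ∑ W ∈ 𝓕, (q:ℝ) ^ ((ζ * k / 2 + -(ζ * k)) * t) :=
        add_le_add hA (Finset.sum_le_sum hB)
      _ = (q:ℝ) ^ (-(c * k)) + (𝓕.card : ℝ) * (q:ℝ) ^ ((ζ * k / 2 + -(ζ * k)) * t) := by
        rw [Finset.sum_const, nsmul_eq_mul]
      _ ≤ (q:ℝ) ^ (-(c * k)) + (q:ℝ) ^ (c * k) * (q:ℝ) ^ ((ζ * k / 2 + -(ζ * k)) * t) :=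
        add_le_add (le_refl _)
          (mul_le_mul_of_nonneg_right hcard (Real.rpow_pos_of_pos hq0 _).le)
      _ ≤ (q:ℝ) ^ (-(c * k)) + (q:ℝ) ^ (-(c * k)) := by
        rw [← Real.rpow_add hq0]
        exact add_le_add (le_refl _) (Real.rpow_le_rpow_of_exponent_le hq1.le hexpB)
      _ = 2 * (q:ℝ) ^ (-(c * k)) := by ring
  -- conclude
  have hsplit : ∑ S : Finset (Fin k → F),
      (p ^ S.card * (1 - p) ^ (n - S.card) *
        (if (m ≤ (S.card : ℝ) ∧ ∀ W ∈ 𝓕,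
            (((S : Set (Fin k → F)) ∩ (W : Set (Fin k → F))).ncard : ℝ) ≤ (ℓ : ℝ))
          then (1:ℝ) else 0)
      + p ^ S.card * (1 - p) ^ (n - S.card) *
        (if (m ≤ (S.card : ℝ) ∧ ∀ W ∈ 𝓕,
            (((S : Set (Fin k → F)) ∩ (W : Set (Fin k → F))).ncard : ℝ) ≤ (ℓ : ℝ))
          then (0:ℝ) else 1))
      = ∑ S : Finset (Fin k → F), p ^ S.card * (1 - p) ^ (n - S.card) :=
    Finset.sum_congr rfl fun S _ => by split <;> ring
  rw [Finset.sum_add_distrib, hsum1] at hsplit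
  linarith [key, hsplit]

set_option maxHeartbeats 1000000 in
theorem stmt_12 {F : Type*} [Field F] [Fintype F] {q : ℕ}
    (hq : Fintype.card F = q) (ζ c : ℝ) (hζ : ζ ∈ Set.Ioo (0 : ℝ) 1) (hc : 0 < c) :
    ∃ k₀ : ℕ, ∀ k : ℕ, k₀ ≤ k →
      ∀ 𝓕 : Finset (AffineSubspace F (Fin k → F)),
        (∀ W ∈ 𝓕, (Module.finrank F W.direction : ℝ) ≤ ζ * k / 2) →
        (𝓕.card : ℝ) ≤ (q : ℝ) ^ (c * k) →
        1 - 2 * (q : ℝ) ^ (-(c * k)) ≤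
          ∑ S : Finset (Fin k → F),
            ((q : ℝ) ^ (-(ζ * k))) ^ S.card *
              (1 - (q : ℝ) ^ (-(ζ * k))) ^ (Fintype.card (Fin k → F) - S.card) *
              (if ((q : ℝ) ^ ((1 - 2 * ζ) * k) ≤ (S.card : ℝ) ∧
                    ∀ W ∈ 𝓕,
                      (((S : Set (Fin k → F)) ∩ (W : Set (Fin k → F))).ncard : ℝ)
                        ≤ (⌈4 * c / ζ⌉₊ : ℝ))
                then 1 else 0) := by
  obtain ⟨hζ0, hζ1⟩ := hζ
  have hq2 : 2 ≤ q := by rw [← hq]; exact Fintype.one_lt_card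
  have hq1 : (1:ℝ) < q := by exact_mod_cast hq2
  have hq0 : (0:ℝ) < q := by linarith
  have hL : 0 < Real.log q := Real.log_pos hq1
  set L := Real.log q with hLdef
  refine ⟨⌈3 / (ζ * L) + 16 * c * L / ((1 - ζ) * L) ^ 2⌉₊ + 1, ?_⟩
  intro k hk 𝓕 hdim hcard
  have hk1 : 1 ≤ k := le_trans (Nat.le_add_left 1 _) hk
  have hkR : 3 / (ζ * L) + 16 * c * L / ((1 - ζ) * L) ^ 2 ≤ (k : ℝ) := by
    calc 3 / (ζ * L) + 16 * c * L / ((1 - ζ) * L) ^ 2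
        ≤ (⌈3 / (ζ * L) + 16 * c * L / ((1 - ζ) * L) ^ 2⌉₊ : ℝ) := Nat.le_ceil _
      _ ≤ (k : ℝ) := by exact_mod_cast Nat.cast_le.mpr (Nat.le_of_succ_le hk)
  have hterm2 : 0 ≤ 16 * c * L / ((1 - ζ) * L) ^ 2 := by positivity
  have hterm1 : 0 ≤ 3 / (ζ * L) := by positivity
  have h3 : 3 ≤ ζ * k * L := by
    have h1 : 3 / (ζ * L) ≤ (k : ℝ) := by linarith
    have h2 : 0 < ζ * L := by positivity
    rw [div_le_iff₀ h2] at h1; nlinarith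
  have h16 : 16 * c * L ≤ ((1 - ζ) * L) ^ 2 * k := by
    have h1 : 16 * c * L / ((1 - ζ) * L) ^ 2 ≤ (k : ℝ) := by linarith
    have h1ζ : (0:ℝ) < 1 - ζ := by linarith
    have h2 : (0:ℝ) < ((1 - ζ) * L) ^ 2 := pow_pos (mul_pos h1ζ hL) 2
    rw [div_le_iff₀ h2] at h1; nlinarith
  -- the two analytic eventual facts
  have h4 : (4:ℝ) ≤ (q:ℝ) ^ (ζ * k) := by
    rw [Real.rpow_def_of_pos hq0]
    have := Real.add_one_le_exp (L * (ζ * k))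
    nlinarith
  have hE2 : 4 * (c * k * L) ≤ (q:ℝ) ^ ((1 - ζ) * k) := by
    rw [Real.rpow_def_of_pos hq0]
    have e1 : Real.exp (L * ((1 - ζ) * k)) = Real.exp (L * ((1 - ζ) * k) / 2) ^ 2 := by
      rw [← Real.exp_nat_mul]; ring_nf
    have e2 : L * ((1 - ζ) * k) / 2 + 1 ≤ Real.exp (L * ((1 - ζ) * k) / 2) :=
      Real.add_one_le_exp _
    have hk0 : (0:ℝ) ≤ (k:ℝ) := Nat.cast_nonneg k
    have h1ζ : (0:ℝ) < 1 - ζ := by linarith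
    have hLk : 0 ≤ L * ((1 - ζ) * k) := by positivity
    nlinarith [sq_nonneg (L * ((1 - ζ) * k) / 2), h16, hk0]
  -- notation
  set p : ℝ := (q:ℝ) ^ (-(ζ * k)) with hpdef
  set n : ℕ := Fintype.card (Fin k → F) with hndef
  have hp0 : 0 < p := Real.rpow_pos_of_pos hq0 _
  have hζk : (0:ℝ) ≤ ζ * k := by positivity
  have hp1 : p ≤ 1 := Real.rpow_le_one_of_one_le_of_nonpos hq1.le (by linarith)
  have h1p : (0:ℝ) ≤ 1 - p := by linarith
  have hnq : (n:ℝ) = (q:ℝ) ^ (k:ℝ) := by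
    have hn' : n = q ^ k := by
      rw [hndef, Fintype.card_fun, hq, Fintype.card_fin]
    rw [hn', Nat.cast_pow, ← Real.rpow_natCast]
  have hnp : (n:ℝ) * p = (q:ℝ) ^ ((1 - ζ) * k) := by
    rw [hnq, hpdef, ← Real.rpow_add hq0]
    congr 1; ring
  have hsum1 : ∑ S : Finset (Fin k → F), p ^ S.card * (1 - p) ^ (n - S.card) = 1 := by
    have h := aux_sub_sum p (1 - p) (∅ : Finset (Fin k → F))
    rw [show p + (1 - p) = (1:ℝ) by ring] at h
    simp only [Finset.card_empty, pow_zero, Nat.sub_zero, one_mul, one_pow,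
      Finset.empty_subset, if_true, mul_one] at h
    rw [hndef]
    exact h
  set ℓ : ℕ := ⌈4 * c / ζ⌉₊ with hℓdef
  set t : ℕ := ℓ + 1 with htdef
  set m : ℝ := (q:ℝ) ^ ((1 - 2 * ζ) * k) with hmdef
  set Wfin : AffineSubspace F (Fin k → F) → Finset (Fin k → F) :=
    fun W : AffineSubspace F (Fin k → F) =>
      (Set.toFinite ((W : Set (Fin k → F)))).toFinset with hWfindef
  clear_value p n ℓ t m Wfin
  exact main_estimate 𝓕 hq hdim hcard hζ0 hζ1 hc hq1 hq0 hL hLdef h4 hE2 p hpdef n hndef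
    hp0 hp1 h1p hnq hnp hsum1 ℓ hℓdef t htdef m hmdef Wfin hWfindef
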